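/- Let f be a rational function on ℂ, not identically zero, all of whose poles have zero residue. Then f has a primitive F which is itself a rational function, F is non-constant, and the image of the map a ↦ F(a) (over points where F is defined) omits at most one complex value; i.e., for every z ∈ ℂ with at most one exception, there exists a ∈ ℂ with F(a) = z. -/

import Mathlib

open Filter Topology

namespace Stmt8Aux

open Polynomial Metric

/-- eval of a rational function is num/denom. -/
lemma eval_eq (x : RatFunc ℂ) (z : ℂ) :
    RatFunc.eval (RingHom.id ℂ) z x = x.num.eval z / x.denom.eval z := rfl

lemma eval₂_id' (p : Polynomial ℂ) (z : ℂ) : Polynomial.eval₂ (RingHom.id ℂ) z p = p.eval z := rfl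

/-- eval of p/q at a point where q doesn't vanish. -/
lemma eval_div (p q : Polynomial ℂ) {z : ℂ} (hq : q.eval z ≠ 0) :
    RatFunc.eval (RingHom.id ℂ) z
      (algebraMap (Polynomial ℂ) (RatFunc ℂ) p / algebraMap (Polynomial ℂ) (RatFunc ℂ) q)
      = p.eval z / q.eval z := by
  have hq0 : q ≠ 0 := fun h => hq (by simp [h])
  set x := algebraMap (Polynomial ℂ) (RatFunc ℂ) p / algebraMap (Polynomial ℂ) (RatFunc ℂ) q with hx
  have hdvd : x.denom ∣ q := RatFunc.denom_div_dvd p q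
  have hdz : x.denom.eval z ≠ 0 := by
    obtain ⟨r, hr⟩ := hdvd
    intro h0
    rw [hr] at hq; simp [h0] at hq
  have hxq : x * algebraMap (Polynomial ℂ) (RatFunc ℂ) q = algebraMap (Polynomial ℂ) (RatFunc ℂ) p := by
    rw [hx, div_mul_cancel₀]
    exact RatFunc.algebraMap_ne_zero hq0
  have := RatFunc.eval_mul (f := RingHom.id ℂ) (a := z) (x := x)
    (y := algebraMap (Polynomial ℂ) (RatFunc ℂ) q) ?_ ?_
  · rw [hxq] at this
    rw [RatFunc.eval_algebraMap, eval₂_id'] at this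
    rw [RatFunc.eval_algebraMap, eval₂_id'] at this
    simp only [Algebra.algebraMap_self, Polynomial.map_id, RingHom.id_apply] at this
    rw [eq_div_iff hq, ← this]
  · rw [eval₂_id']; exact hdz
  · rw [RatFunc.denom_algebraMap, eval₂_id']; simp

/-- uniqueness of num/denom for coprime monic representations -/
lemma num_denom_of (p q : Polynomial ℂ) (hq : q.Monic) (hco : IsCoprime p q) :
    (algebraMap (Polynomial ℂ) (RatFunc ℂ) p / algebraMap (Polynomial ℂ) (RatFunc ℂ) q).num = p ∧
    (algebraMap (Polynomial ℂ) (RatFunc ℂ) p / algebraMap (Polynomial ℂ) (RatFunc ℂ) q).denom = q := by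
  set x := algebraMap (Polynomial ℂ) (RatFunc ℂ) p / algebraMap (Polynomial ℂ) (RatFunc ℂ) q with hx
  have hq0 : q ≠ 0 := hq.ne_zero
  have h1 : x.denom ∣ q := RatFunc.denom_div_dvd p q
  have hcross : p * x.denom = q * x.num := by
    have h3 : algebraMap (Polynomial ℂ) (RatFunc ℂ) x.num / algebraMap (Polynomial ℂ) (RatFunc ℂ) x.denom
        = algebraMap (Polynomial ℂ) (RatFunc ℂ) p / algebraMap (Polynomial ℂ) (RatFunc ℂ) q := by
      rw [RatFunc.num_div_denom]
    have h4 := (div_eq_div_iff (RatFunc.algebraMap_ne_zero (RatFunc.denom_ne_zero x))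
      (RatFunc.algebraMap_ne_zero hq0)).mp h3
    rw [← map_mul, ← map_mul] at h4
    have h6 := (IsFractionRing.injective (Polynomial ℂ) (RatFunc ℂ)) h4
    linear_combination -h6
  have h7 : q ∣ x.denom := by
    have : q ∣ p * x.denom := Dvd.intro _ hcross.symm
    exact (hco.symm.dvd_of_dvd_mul_left this)
  have hde : x.denom = q := Polynomial.eq_of_monic_of_associated (RatFunc.monic_denom x) hq
    (associated_of_dvd_dvd h1 h7)
  refine ⟨?_, hde⟩
  have := hcross
  rw [hde] at this
  have := mul_left_cancel₀ hq0 ((mul_comm p q ▸ this) : q * p = q * x.num)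
  exact this.symm


/-- polynomial antiderivative -/
noncomputable def antideriv (p : Polynomial ℂ) : Polynomial ℂ :=
  p.sum fun n a => Polynomial.C (a / (n + 1)) * Polynomial.X ^ (n + 1)

lemma derivative_antideriv (p : Polynomial ℂ) : (antideriv p).derivative = p := by
  rw [antideriv, Polynomial.sum, map_sum]
  conv_rhs => rw [p.as_sum_support]
  refine Finset.sum_congr rfl fun n _ => ?_
  rw [Polynomial.derivative_C_mul, Polynomial.derivative_X_pow]
  have hn : ((n : ℂ) + 1) ≠ 0 := Nat.cast_add_one_ne_zero n
  rw [Nat.add_sub_cancel, ← mul_assoc, ← Polynomial.C_mul]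
  rw [show p.coeff n / ((n : ℂ) + 1) * ((n + 1 : ℕ) : ℂ) = p.coeff n by push_cast; field_simp]
  rw [← Polynomial.C_mul_X_pow_eq_monomial]

/-- for a finite set not containing b, small closed balls around b avoid it -/
lemma eventually_avoid (S : Finset ℂ) (b : ℂ) (hb : b ∉ S) :
    ∀ᶠ R in 𝓝[>] (0 : ℝ), ∀ z ∈ closedBall b R, z ∉ S := by
  by_cases hS : S.Nonempty
  · set ε := S.inf' hS fun s => dist s b with hε
    have hεpos : 0 < ε := by
      rw [hε, Finset.lt_inf'_iff]
      intro s hs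
      exact dist_pos.mpr (fun h => hb (h ▸ hs))
    filter_upwards [Ioo_mem_nhdsGT_of_mem ⟨le_refl (0:ℝ), hεpos⟩] with R hR z hz hzS
    have h1 : dist z b ≤ R := mem_closedBall.mp hz
    have h2 : ε ≤ dist z b := Finset.inf'_le _ hzS
    linarith [hR.2]
  · filter_upwards with R z hz hzS
    exact hS ⟨z, hzS⟩

/-- small spheres around b avoid a finite set -/
lemma eventually_sphere_avoid (S : Finset ℂ) (b : ℂ) :
    ∀ᶠ R in 𝓝[>] (0 : ℝ), ∀ z ∈ sphere b R, z ∉ S := by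
  filter_upwards [eventually_avoid (S.erase b) b (Finset.notMem_erase b S),
    self_mem_nhdsWithin] with R hR hRpos z hz hzS
  rw [Set.mem_Ioi] at hRpos
  have hzb : z ≠ b := by
    rintro rfl
    rw [mem_sphere, dist_self] at hz
    exact hRpos.ne hz
  exact hR z (sphere_subset_closedBall hz) (Finset.mem_erase.mpr ⟨hzb, hzS⟩)

/-- circle integrability of eval of a rational function whose denominator doesn't vanish
on the sphere -/
lemma circleIntegrable_eval (x : RatFunc ℂ) {b : ℂ} {R : ℝ} (hR : 0 ≤ R)
    (hs : ∀ z ∈ sphere b R, x.denom.eval z ≠ 0) :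
    CircleIntegrable (fun z => RatFunc.eval (RingHom.id ℂ) z x) b R := by
  refine ContinuousOn.circleIntegrable hR ?_
  simp only [eval_eq]
  exact ContinuousOn.div (x.num.continuous_aeval.continuousOn)
    (x.denom.continuous_aeval.continuousOn) hs


lemma eventually_sphere_ne_zero (q : Polynomial ℂ) (hq : q ≠ 0) (b : ℂ) :
    ∀ᶠ R in 𝓝[>] (0 : ℝ), ∀ z ∈ sphere b R, q.eval z ≠ 0 := by
  filter_upwards [eventually_sphere_avoid q.roots.toFinset b] with R hR z hz h0
  exact hR z hz (Multiset.mem_toFinset.mpr ((Polynomial.mem_roots hq).mpr h0))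

lemma eventually_ball_ne_zero (q : Polynomial ℂ) (b : ℂ) (hb : q.eval b ≠ 0) :
    ∀ᶠ R in 𝓝[>] (0 : ℝ), ∀ z ∈ closedBall b R, q.eval z ≠ 0 := by
  have hq : q ≠ 0 := fun h => hb (by simp [h])
  filter_upwards [eventually_avoid q.roots.toFinset b
    (fun h => hb ((Polynomial.mem_roots hq).mp (Multiset.mem_toFinset.mp h)))] with R hR z hz h0
  exact hR z hz (Multiset.mem_toFinset.mpr ((Polynomial.mem_roots hq).mpr h0))

lemma residue_zero_of_simple (f : RatFunc ℂ) (p q1 : Polynomial ℂ) (a : ℂ)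
    (hnum : f.num = p) (hden : f.denom = (Polynomial.X - Polynomial.C a) * q1)
    (hq1a : q1.eval a ≠ 0)
    (hint : ∀ᶠ R in 𝓝[>] (0:ℝ), (∮ z in C(a, R), RatFunc.eval (RingHom.id ℂ) z f) = 0) :
    p.eval a = 0 := by
  obtain ⟨R, hI, hB, hRpos⟩ :=
    (hint.and ((eventually_ball_ne_zero q1 a hq1a).and self_mem_nhdsWithin)).exists
  set g : ℂ → ℂ := fun z => p.eval z / q1.eval z with hg
  have hc : ContinuousOn g (closedBall a R) :=
    ContinuousOn.div (p.continuous_aeval.continuousOn) (q1.continuous_aeval.continuousOn) hB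
  have hd : ∀ x ∈ Metric.ball a R \ (∅ : Set ℂ), DifferentiableAt ℂ g x := by
    intro x hx
    exact DifferentiableAt.div (p.differentiable_aeval x) (q1.differentiable_aeval x)
      (hB x (ball_subset_closedBall hx.1))
  have key := Complex.two_pi_I_inv_smul_circleIntegral_sub_inv_smul_of_differentiable_on_off_countable
    (s := (∅ : Set ℂ)) Set.countable_empty (mem_ball_self hRpos) hc hd
  have hcong : (∮ z in C(a, R), (z - a)⁻¹ • g z) = ∮ z in C(a, R), RatFunc.eval (RingHom.id ℂ) z f := by
    refine circleIntegral.integral_congr hRpos.le fun z hz => ?_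
    have hza : z ≠ a := by
      rintro rfl
      rw [mem_sphere, dist_self] at hz
      exact hRpos.ne hz
    have hq1z : q1.eval z ≠ 0 := hB z (sphere_subset_closedBall hz)
    rw [eval_eq, hnum, hden]
    simp only [Polynomial.eval_mul, Polynomial.eval_sub, Polynomial.eval_X, Polynomial.eval_C,
      smul_eq_mul, hg]
    field_simp
  rw [hcong, hI, smul_zero] at key
  have : g a = 0 := key.symm
  rw [hg] at this
  exact (div_eq_zero_iff.mp this).resolve_right hq1a

lemma hasDerivAt_const_div_pow (c' a : ℂ) (j : ℕ) {z : ℂ} (hz : z ≠ a) :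
    HasDerivAt (fun w => c' / (w - a) ^ j) (c' * ((-(j:ℤ)) * (z - a) ^ (-(j:ℤ) - 1))) z := by
  have h1 : HasDerivAt (fun w : ℂ => (w - a) ^ (-(j:ℤ))) ((-(j:ℤ)) * (z - a) ^ (-(j:ℤ) - 1)) z := by
    have := (hasDerivAt_zpow (-(j:ℤ)) (z - a) (Or.inl (sub_ne_zero.mpr hz)))
    simpa [Function.comp_def] using this.comp z ((hasDerivAt_id z).sub_const a)
  have h2 := h1.const_mul c'
  refine h2.congr_of_eventuallyEq (Eventually.of_forall fun w => ?_)
  show c' / (w - a) ^ j = c' * (w - a) ^ (-(j:ℤ))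
  rw [zpow_neg, zpow_natCast, div_eq_mul_inv]


lemma eval_algebraMap' (p : Polynomial ℂ) (w : ℂ) :
    RatFunc.eval (RingHom.id ℂ) w (algebraMap (Polynomial ℂ) (RatFunc ℂ) p) = p.eval w := by
  rw [RatFunc.eval_algebraMap, eval₂_id']
  simp only [Algebra.algebraMap_self, Polynomial.map_id, RingHom.id_apply]

lemma rootMult_le_of_dvd {A B : Polynomial ℂ} (hB : B ≠ 0) (h : A ∣ B) (a : ℂ) :
    rootMultiplicity a A ≤ rootMultiplicity a B := by
  rw [Polynomial.le_rootMultiplicity_iff hB]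
  exact (Polynomial.pow_rootMultiplicity_dvd A a).trans h

lemma denom_neg' (x : RatFunc ℂ) : (-x).denom = x.denom := by
  have h : -x = algebraMap (Polynomial ℂ) (RatFunc ℂ) (-x.num) /
      algebraMap (Polynomial ℂ) (RatFunc ℂ) x.denom := by
    rw [eq_div_iff (RatFunc.algebraMap_ne_zero (RatFunc.denom_ne_zero x)), map_neg]
    have hx : x * algebraMap (Polynomial ℂ) (RatFunc ℂ) x.denom
        = algebraMap (Polynomial ℂ) (RatFunc ℂ) x.num := by
      nth_rewrite 1 [← RatFunc.num_div_denom x]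
      exact div_mul_cancel₀ _ (RatFunc.algebraMap_ne_zero (RatFunc.denom_ne_zero x))
    linear_combination -hx
  rw [h]
  exact (num_denom_of _ _ (RatFunc.monic_denom x) (RatFunc.isCoprime_num_denom x).neg_left).2

lemma not_isRoot {u : Polynomial ℂ} {z : ℂ} (h : u.eval z ≠ 0) : ¬ u.IsRoot z := h

lemma not_isRoot_pow {u : Polynomial ℂ} {z : ℂ} {n : ℕ} (h : u.eval z ≠ 0) :
    ¬ (u ^ n).IsRoot z := by
  intro hroot
  have h2 : (u ^ n).eval z = 0 := hroot
  rw [Polynomial.eval_pow] at h2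
  exact pow_ne_zero n h h2

def Hres (f : RatFunc ℂ) : Prop :=
  ∀ a : ℂ, ∀ᶠ R in 𝓝[>] (0 : ℝ), (∮ z in C(a, R), RatFunc.eval (RingHom.id ℂ) z f) = 0

def Good (f : RatFunc ℂ) : Prop :=
  ∃ F : RatFunc ℂ,
    (∀ z : ℂ, F.denom.eval z = 0 ↔ f.denom.eval z = 0) ∧
    (∀ z : ℂ, f.denom.eval z = 0 →
      rootMultiplicity z F.denom < rootMultiplicity z f.denom) ∧
    (∀ z : ℂ, F.denom.eval z ≠ 0 →
      HasDerivAt (fun w : ℂ => RatFunc.eval (RingHom.id ℂ) w F)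
        (RatFunc.eval (RingHom.id ℂ) z f) z)

lemma good_of_denom_one (f : RatFunc ℂ) (h : f.denom = 1) : Good f := by
  have hf : f = algebraMap (Polynomial ℂ) (RatFunc ℂ) f.num := by
    conv_lhs => rw [← RatFunc.num_div_denom f]
    rw [h, map_one, div_one]
  refine ⟨algebraMap (Polynomial ℂ) (RatFunc ℂ) (antideriv f.num), ?_, ?_, ?_⟩
  · intro z; rw [RatFunc.denom_algebraMap, h]
  · intro z hz; rw [h] at hz; simp at hz
  · intro z _
    have hev : (fun w : ℂ => RatFunc.eval (RingHom.id ℂ) w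
        (algebraMap (Polynomial ℂ) (RatFunc ℂ) (antideriv f.num)))
        = fun w => (antideriv f.num).eval w := funext fun w => eval_algebraMap' _ w
    rw [hev]
    have : RatFunc.eval (RingHom.id ℂ) z f = f.num.eval z := by
      conv_lhs => rw [hf]
      exact eval_algebraMap' _ z
    rw [this]
    have := Polynomial.hasDerivAt (antideriv f.num) z
    rwa [derivative_antideriv] at this

theorem key : ∀ n : ℕ, ∀ f : RatFunc ℂ, f.denom.natDegree ≤ n → Hres f → Good f := by
  intro n
  induction n with
  | zero =>
    intro f hdeg _
    exact good_of_denom_one f (((RatFunc.monic_denom f).natDegree_eq_zero).mp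
      (Nat.le_zero.mp hdeg))
  | succ n IH =>
    intro f hdeg hres
    by_cases h1 : f.denom.natDegree = 0
    · exact good_of_denom_one f (((RatFunc.monic_denom f).natDegree_eq_zero).mp h1)
    set q := f.denom with hqdef
    set p := f.num with hpdef
    have hq0 : q ≠ 0 := RatFunc.denom_ne_zero f
    have hdegpos : 0 < q.degree := Polynomial.natDegree_pos_iff_degree_pos.mp
      (Nat.pos_of_ne_zero h1)
    obtain ⟨a, ha⟩ := Complex.exists_root hdegpos
    have hak : 1 ≤ rootMultiplicity a q := (Polynomial.rootMultiplicity_pos hq0).mpr ha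
    set j := rootMultiplicity a q - 1 with hjdef
    have hkj : rootMultiplicity a q = j + 1 := (Nat.succ_pred_eq_of_pos hak).symm
    set d := Polynomial.X - Polynomial.C a with hddef
    have hdmon : d.Monic := Polynomial.monic_X_sub_C a
    have hd0 : d ≠ 0 := hdmon.ne_zero
    set q1 := q /ₘ d ^ (j + 1) with hq1def
    have hfact : d ^ (j + 1) * q1 = q := by
      rw [hq1def, ← hkj]
      exact Polynomial.pow_mul_divByMonic_rootMultiplicity_eq q a
    have hq1a : q1.eval a ≠ 0 := by
      rw [hq1def, ← hkj]
      exact Polynomial.eval_divByMonic_pow_rootMultiplicity_ne_zero a hq0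
    have hq10 : q1 ≠ 0 := fun h => hq1a (by simp [h])
    have hco : IsCoprime p q := RatFunc.isCoprime_num_denom f
    have hpa : p.eval a ≠ 0 := by
      intro h0
      obtain ⟨u, v, huv⟩ := hco
      have h2 := congrArg (Polynomial.eval a) huv
      simp only [Polynomial.eval_add, Polynomial.eval_mul, Polynomial.eval_one, h0,
        ha.eq_zero, mul_zero] at h2
      simp at h2
    -- rule out simple pole
    rcases Nat.eq_zero_or_pos j with hj0 | hj1
    · exfalso
      apply hpa
      refine residue_zero_of_simple f p q1 a rfl ?_ hq1a (hres a)
      have h2 : d ^ (j + 1) * q1 = q := hfact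
      rw [hj0, zero_add, pow_one] at h2
      rw [← hqdef, ← h2, hddef]
    -- main case : pole of order j+1, j ≥ 1
    set c := p.eval a / q1.eval a with hcdef
    have hc0 : c ≠ 0 := div_ne_zero hpa hq1a
    have hcop_h : IsCoprime (Polynomial.C c) (d ^ (j + 1)) := by
      refine ⟨Polynomial.C c⁻¹, 0, ?_⟩
      rw [zero_mul, add_zero, ← Polynomial.C_mul, inv_mul_cancel₀ hc0, Polynomial.C_1]
    set hh := algebraMap (Polynomial ℂ) (RatFunc ℂ) (Polynomial.C c) /
      algebraMap (Polynomial ℂ) (RatFunc ℂ) (d ^ (j + 1)) with hhdef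
    obtain ⟨hh_num, hh_denom⟩ := num_denom_of (Polynomial.C c) (d ^ (j + 1))
      (hdmon.pow _) hcop_h
    rw [← hhdef] at hh_num hh_denom
    set f1 := f - hh with hf1def
    have hff1 : f = f1 + hh := by rw [hf1def]; ring
    have hdvd_pq : d ∣ (p - Polynomial.C c * q1) := by
      rw [hddef, Polynomial.dvd_iff_isRoot]
      show Polynomial.eval a (p - Polynomial.C c * q1) = 0
      rw [Polynomial.eval_sub, Polynomial.eval_mul, Polynomial.eval_C, hcdef,
        div_mul_cancel₀ _ hq1a, sub_self]
    obtain ⟨p2, hp2⟩ := hdvd_pq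
    have hq' : algebraMap (Polynomial ℂ) (RatFunc ℂ) q ≠ 0 := RatFunc.algebraMap_ne_zero hq0
    have hdk' : algebraMap (Polynomial ℂ) (RatFunc ℂ) (d ^ (j + 1)) ≠ 0 :=
      RatFunc.algebraMap_ne_zero (pow_ne_zero _ hd0)
    have hdjq1 : d ^ j * q1 ≠ 0 := mul_ne_zero (pow_ne_zero _ hd0) hq10
    have hdj' : algebraMap (Polynomial ℂ) (RatFunc ℂ) (d ^ j * q1) ≠ 0 :=
      RatFunc.algebraMap_ne_zero hdjq1
    have hf1rep : f1 = algebraMap (Polynomial ℂ) (RatFunc ℂ) p2 /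
        algebraMap (Polynomial ℂ) (RatFunc ℂ) (d ^ j * q1) := by
      rw [hf1def, hhdef]
      conv_lhs => rw [← RatFunc.num_div_denom f, ← hpdef, ← hqdef]
      rw [div_sub_div _ _ hq' hdk', div_eq_div_iff (mul_ne_zero hq' hdk') hdj']
      simp only [← map_mul, ← map_sub]
      rw [Function.Injective.eq_iff (IsFractionRing.injective (Polynomial ℂ) (RatFunc ℂ))]
      linear_combination (d ^ (j+1) * d ^ j * q1) * hp2 +
        (Polynomial.C c * d ^ j * q1 + p2 * d ^ (j+1)) * hfact
    have hf1dvd : f1.denom ∣ d ^ j * q1 := by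
      rw [hf1rep]; exact RatFunc.denom_div_dvd p2 (d ^ j * q1)
    have hf1deg : f1.denom.natDegree ≤ n := by
      have h2 := Polynomial.natDegree_le_of_dvd hf1dvd hdjq1
      have h3 : (d ^ j * q1).natDegree = j + q1.natDegree := by
        rw [Polynomial.natDegree_mul (pow_ne_zero _ hd0) hq10, Polynomial.natDegree_pow,
          hddef, Polynomial.natDegree_X_sub_C, mul_one]
      have h4 : q.natDegree = j + 1 + q1.natDegree := by
        rw [← hfact, Polynomial.natDegree_mul (pow_ne_zero _ hd0) hq10,
          Polynomial.natDegree_pow, hddef, Polynomial.natDegree_X_sub_C, mul_one]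
      omega
    -- eval of f1 denominator nonzero away from zeros of q
    have hf1dz : ∀ z : ℂ, q.eval z ≠ 0 → f1.denom.eval z ≠ 0 := by
      intro z hz h0
      have hza : z ≠ a := by
        rintro rfl
        exact hz ha
      obtain ⟨r, hr⟩ := hf1dvd
      have h2 : (d ^ j * q1).eval z = 0 := by rw [hr, Polynomial.eval_mul, h0, zero_mul]
      rw [Polynomial.eval_mul, Polynomial.eval_pow] at h2
      have hdz : d.eval z ≠ 0 := by
        rw [hddef]
        simpa [sub_eq_zero] using hza
      rcases mul_eq_zero.mp h2 with h | h
      · exact pow_ne_zero _ hdz h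
      · exact hz (by rw [← hfact, Polynomial.eval_mul, h, mul_zero])
    have hq1z_to_f1 : ∀ z : ℂ, z ≠ a → q1.eval z = 0 → f1.denom.eval z = 0 := by
      intro z hza hq1z
      have hXz : (Polynomial.X - Polynomial.C z) ∣ q := by
        rw [← hfact]
        exact Dvd.dvd.mul_left (Polynomial.dvd_iff_isRoot.mpr hq1z) _
      have hq_dvd : q ∣ f1.denom * hh.denom := by
        have := RatFunc.denom_add_dvd f1 hh
        rwa [← hff1, ← hqdef] at this
      have hprime := Polynomial.prime_X_sub_C z
      have h5 : (Polynomial.X - Polynomial.C z) ∣ f1.denom * hh.denom := hXz.trans hq_dvd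
      rcases hprime.2.2 _ _ h5 with h6 | h6
      · exact Polynomial.dvd_iff_isRoot.mp h6
      · exfalso
        rw [hh_denom] at h6
        have h7 : (Polynomial.X - Polynomial.C z) ∣ d := hprime.dvd_of_dvd_pow h6
        have h9 : d.eval z = 0 :=
          Polynomial.eval_eq_zero_of_dvd_of_eval_eq_zero h7 (by simp)
        rw [hddef] at h9
        simp only [Polynomial.eval_sub, Polynomial.eval_X, Polynomial.eval_C] at h9
        exact hza (sub_eq_zero.mp h9)
    -- transfer residue hypothesis
    have hres1 : Hres f1 := by
      intro b
      filter_upwards [hres b, eventually_sphere_ne_zero q hq0 b, self_mem_nhdsWithin]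
        with R hI hS hRpos
      rw [Set.mem_Ioi] at hRpos
      have hsph : ∀ z ∈ sphere b R, z ≠ a := by
        intro z hz h
        exact hS z hz (by rw [h]; exact ha.eq_zero)
      have hf1S : ∀ z ∈ sphere b R, f1.denom.eval z ≠ 0 := fun z hz => hf1dz z (hS z hz)
      have hhS : ∀ z ∈ sphere b R, hh.denom.eval z ≠ 0 := by
        intro z hz
        rw [hh_denom, Polynomial.eval_pow, hddef]
        simp only [Polynomial.eval_sub, Polynomial.eval_X, Polynomial.eval_C]
        exact pow_ne_zero _ (sub_ne_zero.mpr (hsph z hz))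
      have hcong : Set.EqOn (fun z => RatFunc.eval (RingHom.id ℂ) z f1)
          (fun z => RatFunc.eval (RingHom.id ℂ) z f - RatFunc.eval (RingHom.id ℂ) z hh)
          (sphere b R) := by
        intro z hz
        have := RatFunc.eval_add (f := RingHom.id ℂ) (a := z) (x := f1) (y := hh)
          (by rw [eval₂_id']; exact hf1S z hz) (by rw [eval₂_id']; exact hhS z hz)
        rw [← hff1] at this
        simp only
        rw [this]; ring
      rw [circleIntegral.integral_congr hRpos.le hcong]
      rw [circleIntegral.integral_sub
        (circleIntegrable_eval f hRpos.le (fun z hz => hS z hz))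
        (circleIntegrable_eval hh hRpos.le (fun z hz => hhS z hz))]
      rw [hI, zero_sub, neg_eq_zero]
      have hcong2 : Set.EqOn (fun z => RatFunc.eval (RingHom.id ℂ) z hh)
          (fun z => c • (z - a) ^ (-(j + 1 : ℤ))) (sphere b R) := by
        intro z hz
        show RatFunc.eval (RingHom.id ℂ) z hh = c • (z - a) ^ (-(j + 1 : ℤ))
        rw [eval_eq, hh_num, hh_denom]
        simp only [Polynomial.eval_C, Polynomial.eval_pow, hddef, Polynomial.eval_sub,
          Polynomial.eval_X, Polynomial.eval_C, smul_eq_mul]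
        rw [zpow_neg, ← zpow_natCast (z - a) (j + 1)]
        push_cast
        rw [div_eq_mul_inv]
      rw [circleIntegral.integral_congr hRpos.le hcong2]
      rw [circleIntegral.integral_smul]
      rw [circleIntegral.integral_sub_zpow_of_ne (by omega) b a R, smul_zero]
    -- apply induction hypothesis
    obtain ⟨F1, hA1, hB1, hD1⟩ := IH f1 hf1deg hres1
    -- build g0
    set c' := -c / (j : ℂ) with hc'def
    have hjC : (j : ℂ) ≠ 0 := Nat.cast_ne_zero.mpr (by omega)
    have hc'0 : c' ≠ 0 := div_ne_zero (neg_ne_zero.mpr hc0) hjC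
    have hcop_g : IsCoprime (Polynomial.C c') (d ^ j) := by
      refine ⟨Polynomial.C c'⁻¹, 0, ?_⟩
      rw [zero_mul, add_zero, ← Polynomial.C_mul, inv_mul_cancel₀ hc'0, Polynomial.C_1]
    set g0 := algebraMap (Polynomial ℂ) (RatFunc ℂ) (Polynomial.C c') /
      algebraMap (Polynomial ℂ) (RatFunc ℂ) (d ^ j) with hg0def
    obtain ⟨g0_num, g0_denom⟩ := num_denom_of (Polynomial.C c') (d ^ j) (hdmon.pow _) hcop_g
    rw [← hg0def] at g0_num g0_denom
    set F := F1 + g0 with hFdef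
    -- rootMultiplicity of F1.denom at a
    set m := rootMultiplicity a F1.denom with hmdef
    have hF10 : F1.denom ≠ 0 := RatFunc.denom_ne_zero F1
    have hmj : m < j := by
      by_cases hf1a : f1.denom.eval a = 0
      · have h2 := hB1 a hf1a
        have h3 : rootMultiplicity a f1.denom ≤ j := by
          have := rootMult_le_of_dvd hdjq1 hf1dvd a
          rwa [Polynomial.rootMultiplicity_mul hdjq1, hddef,
            Polynomial.rootMultiplicity_X_sub_C_pow,
            Polynomial.rootMultiplicity_eq_zero (p := q1) (not_isRoot hq1a),
            add_zero] at this
        omega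
      · have h2 : F1.denom.eval a ≠ 0 := fun h => hf1a ((hA1 a).mp h)
        have : m = 0 := by
          rw [hmdef]
          exact Polynomial.rootMultiplicity_eq_zero (not_isRoot h2)
        omega
    set e := F1.denom /ₘ d ^ m with hedef
    have hFe : d ^ m * e = F1.denom := by
      rw [hedef, hmdef, hddef]
      exact Polynomial.pow_mul_divByMonic_rootMultiplicity_eq F1.denom a
    have hea : e.eval a ≠ 0 := by
      rw [hedef, hmdef, hddef]
      exact Polynomial.eval_divByMonic_pow_rootMultiplicity_ne_zero a hF10
    have he0 : e ≠ 0 := fun h => hea (by simp [h])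
    set t := j - m with htdef
    have hjt : j = m + t := by omega
    have hF1' : algebraMap (Polynomial ℂ) (RatFunc ℂ) F1.denom ≠ 0 :=
      RatFunc.algebraMap_ne_zero hF10
    have hdjne : algebraMap (Polynomial ℂ) (RatFunc ℂ) (d ^ j) ≠ 0 :=
      RatFunc.algebraMap_ne_zero (pow_ne_zero _ hd0)
    have hedj : e * d ^ j ≠ 0 := mul_ne_zero he0 (pow_ne_zero _ hd0)
    have hrep : F = algebraMap (Polynomial ℂ) (RatFunc ℂ) (F1.num * d ^ t + Polynomial.C c' * e) /
        algebraMap (Polynomial ℂ) (RatFunc ℂ) (e * d ^ j) := by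
      rw [hFdef, hg0def]
      conv_lhs => rw [← RatFunc.num_div_denom F1]
      rw [div_add_div _ _ hF1' hdjne, div_eq_div_iff (mul_ne_zero hF1' hdjne)
        (RatFunc.algebraMap_ne_zero hedj)]
      simp only [← map_mul, ← map_add]
      rw [Function.Injective.eq_iff (IsFractionRing.injective (Polynomial ℂ) (RatFunc ℂ))]
      rw [hjt, pow_add]
      linear_combination (F1.num * d ^ t * d ^ m * d ^ t) * hFe
    have hFdvd : F.denom ∣ e * d ^ j := by
      rw [hrep]; exact RatFunc.denom_div_dvd _ _
    have hF0 : F.denom ≠ 0 := RatFunc.denom_ne_zero F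
    -- zero set of F.denom equals zero set of q
    have hAiff : ∀ z : ℂ, F.denom.eval z = 0 ↔ q.eval z = 0 := by
      intro z
      constructor
      · intro hz
        obtain ⟨r, hr⟩ := hFdvd
        have : (e * d ^ j).eval z = 0 := by rw [hr, Polynomial.eval_mul, hz, zero_mul]
        rw [Polynomial.eval_mul, Polynomial.eval_pow] at this
        rcases mul_eq_zero.mp this with h | h
        · -- e z = 0 hence F1.denom z = 0 hence f1 pole hence q pole
          have hF1z : F1.denom.eval z = 0 := by
            rw [← hFe, Polynomial.eval_mul, h, mul_zero]
          have hf1z : f1.denom.eval z = 0 := (hA1 z).mp hF1z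
          by_contra hqz
          exact hf1dz z hqz hf1z
        · have : z = a := by
            have := pow_eq_zero_iff (n := j) (by omega) |>.mp h
            rw [hddef] at this
            simpa [sub_eq_zero] using this
          rw [this]
          exact ha.eq_zero
      · intro hz
        by_cases hza : z = a
        · -- use lower bound on multiplicity
          subst hza
          have hdvd2 : g0.denom ∣ F.denom * F1.denom := by
            have h2 : F + (-F1) = g0 := by rw [hFdef]; ring
            have h3 := RatFunc.denom_add_dvd F (-F1)
            rw [h2, denom_neg'] at h3
            exact h3
          rw [g0_denom] at hdvd2
          have h4 := rootMult_le_of_dvd (mul_ne_zero hF0 hF10) hdvd2 z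
          rw [hddef, Polynomial.rootMultiplicity_X_sub_C_pow,
            Polynomial.rootMultiplicity_mul (mul_ne_zero hF0 hF10)] at h4
          have h5 : 0 < rootMultiplicity z F.denom := by omega
          have := (Polynomial.rootMultiplicity_pos hF0).mp h5
          exact this
        · have hq1z : q1.eval z = 0 := by
            rw [← hfact, Polynomial.eval_mul, Polynomial.eval_pow] at hz
            rcases mul_eq_zero.mp hz with h | h
            · exfalso
              have := pow_eq_zero_iff (n := j + 1) (by omega) |>.mp h
              rw [hddef] at this
              exact hza (by simpa [sub_eq_zero] using this)
            · exact h
          have hf1z := hq1z_to_f1 z hza hq1z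
          have hF1z : F1.denom.eval z = 0 := (hA1 z).mpr hf1z
          -- F1.denom ∣ F.denom * g0.denom
          have hdvd3 : F1.denom ∣ F.denom * g0.denom := by
            have h2 : F + (-g0) = F1 := by rw [hFdef]; ring
            have h3 := RatFunc.denom_add_dvd F (-g0)
            rw [h2, denom_neg'] at h3
            exact h3
          rw [g0_denom] at hdvd3
          have h5 : (Polynomial.X - Polynomial.C z) ∣ F1.denom :=
            Polynomial.dvd_iff_isRoot.mpr hF1z
          have h6 := h5.trans hdvd3
          rcases (Polynomial.prime_X_sub_C z).2.2 _ _ h6 with h7 | h7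
          · exact Polynomial.dvd_iff_isRoot.mp h7
          · exfalso
            have h8 : (Polynomial.X - Polynomial.C z) ∣ d :=
              (Polynomial.prime_X_sub_C z).dvd_of_dvd_pow h7
            have h9 : d.eval z = 0 :=
              Polynomial.eval_eq_zero_of_dvd_of_eval_eq_zero h8 (by simp)
            rw [hddef] at h9
            simp only [Polynomial.eval_sub, Polynomial.eval_X, Polynomial.eval_C] at h9
            exact hza (sub_eq_zero.mp h9)
    -- multiplicity bound
    have hBlt : ∀ z : ℂ, q.eval z = 0 → rootMultiplicity z F.denom < rootMultiplicity z q := by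
      intro z hz
      by_cases hza : z = a
      · subst hza
        have h2 := rootMult_le_of_dvd hedj hFdvd z
        rw [Polynomial.rootMultiplicity_mul hedj, hddef,
          Polynomial.rootMultiplicity_X_sub_C_pow,
          Polynomial.rootMultiplicity_eq_zero (p := e) (not_isRoot hea),
          zero_add] at h2
        have h3 : rootMultiplicity z q = j + 1 := hkj
        omega
      · have hq1z : q1.eval z = 0 := by
          rw [← hfact, Polynomial.eval_mul, Polynomial.eval_pow] at hz
          rcases mul_eq_zero.mp hz with h | h
          · exfalso
            have := pow_eq_zero_iff (n := j + 1) (by omega) |>.mp h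
            rw [hddef] at this
            exact hza (by simpa [sub_eq_zero] using this)
          · exact h
        have hdz : d.eval z ≠ 0 := by
          rw [hddef]; simpa [sub_eq_zero] using hza
        have hmultq : rootMultiplicity z q = rootMultiplicity z q1 := by
          rw [← hfact, Polynomial.rootMultiplicity_mul (by rw [hfact]; exact hq0),
            Polynomial.rootMultiplicity_eq_zero (p := d ^ (j + 1)) (not_isRoot_pow hdz),
            zero_add]
        have hf1z := hq1z_to_f1 z hza hq1z
        have hlt := hB1 z hf1z
        have hle1 : rootMultiplicity z f1.denom ≤ rootMultiplicity z q1 := by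
          have h2 := rootMult_le_of_dvd hdjq1 hf1dvd z
          rwa [Polynomial.rootMultiplicity_mul hdjq1,
            Polynomial.rootMultiplicity_eq_zero (p := d ^ j) (not_isRoot_pow hdz),
            zero_add] at h2
        have hle2 : rootMultiplicity z F.denom ≤ rootMultiplicity z F1.denom := by
          have hdvd4 : F.denom ∣ F1.denom * d ^ j := by
            have h3 := RatFunc.denom_add_dvd F1 g0
            rwa [← hFdef, g0_denom] at h3
          have h2 := rootMult_le_of_dvd (mul_ne_zero hF10 (pow_ne_zero _ hd0)) hdvd4 z
          rwa [Polynomial.rootMultiplicity_mul (mul_ne_zero hF10 (pow_ne_zero _ hd0)),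
            Polynomial.rootMultiplicity_eq_zero (p := d ^ j) (not_isRoot_pow hdz),
            add_zero] at h2
        omega
    -- derivative property
    refine ⟨F, hAiff, hBlt, ?_⟩
    intro z hFz
    have hqz : q.eval z ≠ 0 := fun h => hFz ((hAiff z).mpr h)
    have hza : z ≠ a := by
      rintro rfl
      exact hqz ha.eq_zero
    have hq1z : q1.eval z ≠ 0 := fun h => hqz (by rw [← hfact, Polynomial.eval_mul, h, mul_zero])
    have hdz : (z - a) ≠ 0 := sub_ne_zero.mpr hza
    have hf1z : f1.denom.eval z ≠ 0 := hf1dz z hqz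
    have hF1z : F1.denom.eval z ≠ 0 := fun h => hf1z ((hA1 z).mp h)
    have hg0z : g0.denom.eval z ≠ 0 := by
      rw [g0_denom, Polynomial.eval_pow, hddef]
      simp only [Polynomial.eval_sub, Polynomial.eval_X, Polynomial.eval_C]
      exact pow_ne_zero _ hdz
    have hhz : hh.denom.eval z ≠ 0 := by
      rw [hh_denom, Polynomial.eval_pow, hddef]
      simp only [Polynomial.eval_sub, Polynomial.eval_X, Polynomial.eval_C]
      exact pow_ne_zero _ hdz
    have hd1 := hD1 z hF1z
    have hd2 := hasDerivAt_const_div_pow c' a j hza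
    have hsum := hd1.add hd2
    have hev : (fun w => RatFunc.eval (RingHom.id ℂ) w F1 + c' / (w - a) ^ j)
        =ᶠ[𝓝 z] fun w : ℂ => RatFunc.eval (RingHom.id ℂ) w F := by
      have hcont1 : ContinuousAt (fun w => F1.denom.eval w) z := F1.denom.continuous_aeval.continuousAt
      have hcont2 : ContinuousAt (fun w : ℂ => w - a) z := by fun_prop
      filter_upwards [hcont1.eventually_ne hF1z, hcont2.eventually_ne hdz] with w hw1 hw2
      have hg0w : g0.denom.eval w ≠ 0 := by
        rw [g0_denom, Polynomial.eval_pow, hddef]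
        simp only [Polynomial.eval_sub, Polynomial.eval_X, Polynomial.eval_C]
        exact pow_ne_zero _ hw2
      have heq := RatFunc.eval_add (f := RingHom.id ℂ) (a := w) (x := F1) (y := g0)
        (by rw [eval₂_id']; exact hw1) (by rw [eval₂_id']; exact hg0w)
      rw [← hFdef] at heq
      rw [heq]
      congr 1
      rw [eval_eq, g0_num, g0_denom, Polynomial.eval_C, Polynomial.eval_pow, hddef]
      simp only [Polynomial.eval_sub, Polynomial.eval_X, Polynomial.eval_C]
    have hder := hsum.congr_of_eventuallyEq hev.symm
    -- identify the derivative value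
    have hvalue : RatFunc.eval (RingHom.id ℂ) z f1 + c' * ((-(j:ℤ)) * (z - a) ^ (-(j:ℤ) - 1))
        = RatFunc.eval (RingHom.id ℂ) z f := by
      have heq := RatFunc.eval_add (f := RingHom.id ℂ) (a := z) (x := f1) (y := hh)
        (by rw [eval₂_id']; exact hf1z) (by rw [eval₂_id']; exact hhz)
      rw [← hff1] at heq
      rw [heq]
      congr 1
      rw [eval_eq, hh_num, hh_denom, Polynomial.eval_C, Polynomial.eval_pow, hddef]
      simp only [Polynomial.eval_sub, Polynomial.eval_X, Polynomial.eval_C]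
      rw [hc'def]
      have hzz : -(j:ℤ) - 1 = -((j:ℤ) + 1) := by ring
      rw [hzz, zpow_neg, ← zpow_natCast (z - a) (j + 1)]
      push_cast
      field_simp
    rw [hvalue] at hder
    exact hder

end Stmt8Aux

open Stmt8Aux in

/-- Let `f` be a nonzero rational function on `ℂ` all of whose poles have zero residue
(equivalently, the integral of `f` over every sufficiently small circle vanishes).  Then `f`
has a primitive `F` which is itself a rational function; `F` is non-constant, and the image
of `a ↦ F(a)` over the points where `F` is defined omits at most one complex value. -/
theorem stmt_8 (f : RatFunc ℂ) (hf : f ≠ 0)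
    (hres : ∀ a : ℂ, ∀ᶠ R in 𝓝[>] (0 : ℝ),
      (∮ z in C(a, R), RatFunc.eval (RingHom.id ℂ) z f) = 0) :
    ∃ F : RatFunc ℂ,
      (¬ ∃ c : ℂ, F = RatFunc.C c) ∧
      (∀ z : ℂ, Polynomial.eval z F.denom ≠ 0 →
        HasDerivAt (fun w : ℂ => RatFunc.eval (RingHom.id ℂ) w F)
          (RatFunc.eval (RingHom.id ℂ) z f) z) ∧
      {z : ℂ | ¬ ∃ a : ℂ, Polynomial.eval a F.denom ≠ 0 ∧
          RatFunc.eval (RingHom.id ℂ) a F = z}.Subsingleton := by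
  obtain ⟨F, hA, hB, hD⟩ := Stmt8Aux.key f.denom.natDegree f le_rfl hres
  have hnc : ¬ ∃ c : ℂ, F = RatFunc.C c := by
    rintro ⟨c0, rfl⟩
    have hden : (RatFunc.C c0).denom = 1 := RatFunc.denom_C c0
    have hzero : ∀ z : ℂ, RatFunc.eval (RingHom.id ℂ) z f = 0 := by
      intro z
      have h2 := hD z (by rw [hden]; simp)
      have h3 : (fun w : ℂ => RatFunc.eval (RingHom.id ℂ) w (RatFunc.C c0))
          = fun _ => c0 := by
        funext w
        rw [RatFunc.eval_C]
        rfl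
      rw [h3] at h2
      exact h2.unique (hasDerivAt_const z c0)
    apply hf
    rw [← RatFunc.num_eq_zero_iff]
    have hprod : f.num * f.denom = 0 := by
      apply Polynomial.zero_of_eval_zero
      intro z
      rw [Polynomial.eval_mul]
      by_cases hz : f.denom.eval z = 0
      · rw [hz, mul_zero]
      · have h4 := hzero z
        rw [Stmt8Aux.eval_eq, _root_.div_eq_zero_iff] at h4
        rcases h4 with h4 | h4
        · rw [h4, zero_mul]
        · exact absurd h4 hz
    rcases mul_eq_zero.mp hprod with h | h
    · exact h
    · exact absurd h (RatFunc.denom_ne_zero f)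
  have hQ0 : F.denom ≠ 0 := RatFunc.denom_ne_zero F
  have hcop : IsCoprime F.num F.denom := RatFunc.isCoprime_num_denom F
  have claim : ∀ z : ℂ, (F.num - Polynomial.C z * F.denom).natDegree ≠ 0 →
      ∃ a : ℂ, F.denom.eval a ≠ 0 ∧ RatFunc.eval (RingHom.id ℂ) a F = z := by
    intro z hz
    have hdeg : 0 < (F.num - Polynomial.C z * F.denom).degree :=
      Polynomial.natDegree_pos_iff_degree_pos.mp (Nat.pos_of_ne_zero hz)
    obtain ⟨a, hroot⟩ := Complex.exists_root hdeg
    have h5 : F.num.eval a - z * F.denom.eval a = 0 := by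
      have h6 : (F.num - Polynomial.C z * F.denom).eval a = 0 := hroot
      simpa using h6
    have hPa : F.num.eval a = z * F.denom.eval a := by linear_combination h5
    have hQa : F.denom.eval a ≠ 0 := by
      intro h0
      have hP0 : F.num.eval a = 0 := by rw [hPa, h0, mul_zero]
      obtain ⟨u, v, huv⟩ := hcop
      have h7 := congrArg (Polynomial.eval a) huv
      simp only [Polynomial.eval_add, Polynomial.eval_mul, Polynomial.eval_one, hP0, h0,
        mul_zero, add_zero, zero_add] at h7
      simp at h7
    refine ⟨a, hQa, ?_⟩
    rw [Stmt8Aux.eval_eq, hPa]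
    field_simp
  refine ⟨F, hnc, hD, ?_⟩
  intro z1 hz1 z2 hz2
  simp only [Set.mem_setOf_eq] at hz1 hz2
  by_contra hne
  have h1 : (F.num - Polynomial.C z1 * F.denom).natDegree = 0 := by
    by_contra h
    exact hz1 (claim z1 h)
  have h2 : (F.num - Polynomial.C z2 * F.denom).natDegree = 0 := by
    by_contra h
    exact hz2 (claim z2 h)
  have hQdeg : F.denom.natDegree = 0 := by
    have hsub2 : (F.num - Polynomial.C z1 * F.denom) - (F.num - Polynomial.C z2 * F.denom)
        = Polynomial.C (z2 - z1) * F.denom := by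
      rw [Polynomial.C_sub]
      ring
    have h8 := Polynomial.natDegree_sub_le (F.num - Polynomial.C z1 * F.denom)
      (F.num - Polynomial.C z2 * F.denom)
    rw [hsub2, h1, h2, Polynomial.natDegree_C_mul (sub_ne_zero.mpr (Ne.symm hne))] at h8
    omega
  have hPdeg : F.num.natDegree = 0 := by
    have h9 : F.num = (F.num - Polynomial.C z1 * F.denom) + Polynomial.C z1 * F.denom := by
      ring
    have h10 := Polynomial.natDegree_add_le (F.num - Polynomial.C z1 * F.denom)
      (Polynomial.C z1 * F.denom)
    have h11 : (Polynomial.C z1 * F.denom).natDegree ≤ 0 := by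
      have := Polynomial.natDegree_mul_le (p := Polynomial.C z1) (q := F.denom)
      simpa [hQdeg] using this
    rw [← h9, h1] at h10
    omega
  obtain ⟨pc, hpc⟩ := Polynomial.natDegree_eq_zero.mp hPdeg
  have hQ1 : F.denom = 1 := (RatFunc.monic_denom F).natDegree_eq_zero.mp hQdeg
  apply hnc
  refine ⟨pc, ?_⟩
  rw [← RatFunc.num_div_denom F, hQ1, map_one, div_one, ← hpc, RatFunc.algebraMap_C]
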